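/- For every x, y in X and all nonnegative integers n, m, one has Ē(T^n x, T^m y) = Ē(x, y). -/

import Mathlib

open Filter MeasureTheory Topology

noncomputable def EnDist {X : Type*} [MetricSpace X] (T : X → X) (n : ℕ) (x y : X) : ℝ :=
  ⨅ σ : Equiv.Perm (Fin n), (1 / (n : ℝ)) * ∑ k : Fin n, dist (T^[(k : ℕ)] x) (T^[((σ k) : ℕ)] y)

noncomputable def Ebar {X : Type*} [MetricSpace X] (T : X → X) (x y : X) : ℝ :=
  Filter.limsup (fun n => EnDist T n x y) Filter.atTop

section Aux

open Finset Equiv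

variable {X : Type*} [MetricSpace X]

private lemma EnDist_bddBelow (T : X → X) (n : ℕ) (x y : X) :
    BddBelow (Set.range fun σ : Equiv.Perm (Fin n) =>
      (1 / (n : ℝ)) * ∑ k : Fin n, dist (T^[(k : ℕ)] x) (T^[((σ k) : ℕ)] y)) :=
  (Set.finite_range _).bddBelow

private lemma EnDist_le' (T : X → X) (n : ℕ) (x y : X) (σ : Equiv.Perm (Fin n)) :
    EnDist T n x y ≤ (1 / (n : ℝ)) * ∑ k : Fin n, dist (T^[(k : ℕ)] x) (T^[((σ k) : ℕ)] y) :=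
  ciInf_le (EnDist_bddBelow T n x y) σ

private lemma EnDist_nonneg (T : X → X) (n : ℕ) (x y : X) : 0 ≤ EnDist T n x y :=
  le_ciInf fun σ => by positivity

private lemma EnDist_exists (T : X → X) (n : ℕ) (x y : X) :
    ∃ σ : Equiv.Perm (Fin n),
      EnDist T n x y = (1 / (n : ℝ)) * ∑ k : Fin n, dist (T^[(k : ℕ)] x) (T^[((σ k) : ℕ)] y) := by
  obtain ⟨σ₀, hσ₀⟩ := Finite.exists_min
    (fun σ : Equiv.Perm (Fin n) =>
      (1 / (n : ℝ)) * ∑ k : Fin n, dist (T^[(k : ℕ)] x) (T^[((σ k) : ℕ)] y))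
  exact ⟨σ₀, le_antisymm (EnDist_le' T n x y σ₀) (le_ciInf hσ₀)⟩

variable [CompactSpace X]

private lemma dist_le_D (a b : X) : dist a b ≤ Metric.diam (Set.univ : Set X) :=
  Metric.dist_le_diam_of_mem isCompact_univ.isBounded trivial trivial

private lemma EnDist_le_D (T : X → X) (n : ℕ) (x y : X) :
    EnDist T n x y ≤ Metric.diam (Set.univ : Set X) := by
  refine (EnDist_le' T n x y 1).trans ?_
  rcases Nat.eq_zero_or_pos n with hn | hn
  · subst hn; simp [Metric.diam_nonneg]
  have h1 : ∑ k : Fin n, dist (T^[(k : ℕ)] x) (T^[(((1 : Equiv.Perm (Fin n)) k) : ℕ)] y)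
      ≤ ∑ _k : Fin n, Metric.diam (Set.univ : Set X) :=
    Finset.sum_le_sum fun k _ => dist_le_D _ _
  have hn' : (0 : ℝ) < n := by exact_mod_cast hn
  calc (1 / (n : ℝ)) * ∑ k : Fin n, dist (T^[(k : ℕ)] x) (T^[(((1 : Equiv.Perm (Fin n)) k) : ℕ)] y)
      ≤ (1 / (n : ℝ)) * ∑ _k : Fin n, Metric.diam (Set.univ : Set X) :=
        mul_le_mul_of_nonneg_left h1 (by positivity)
    _ = Metric.diam (Set.univ : Set X) := by
        rw [Finset.sum_const]
        simp only [Finset.card_univ, Fintype.card_fin, nsmul_eq_mul]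
        field_simp

private lemma key1 (T : X → X) (x y : X) (N : ℕ) :
    ((N : ℝ) + 1) * EnDist T (N + 1) x y ≤
      (N : ℝ) * EnDist T N (T x) y + Metric.diam (Set.univ : Set X) := by
  set D := Metric.diam (Set.univ : Set X) with hD
  obtain ⟨σ₀, hσ₀⟩ := EnDist_exists T N (T x) y
  set S : ℝ := ∑ k : Fin N, dist (T^[(k : ℕ)] (T x)) (T^[((σ₀ k) : ℕ)] y) with hS
  set τ : Equiv.Perm (Fin (N + 1)) :=
    (finSuccEquiv N).trans ((Equiv.optionCongr σ₀).trans finSuccEquivLast.symm) with hτ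
  have hτ0 : τ 0 = Fin.last N := by
    simp [hτ, finSuccEquiv_zero]
  have hτs : ∀ i : Fin N, τ i.succ = Fin.castSucc (σ₀ i) := fun i => by
    simp [hτ, finSuccEquiv_succ]
  have hsum : ∑ k : Fin (N + 1), dist (T^[(k : ℕ)] x) (T^[((τ k) : ℕ)] y)
      = dist x (T^[N] y) + S := by
    rw [Fin.sum_univ_succ, hτ0]
    simp only [Fin.val_zero, Function.iterate_zero_apply, Fin.val_last]
    congr 1
    refine Finset.sum_congr rfl fun i _ => ?_
    rw [hτs i]
    simp [Fin.val_succ, Function.iterate_succ_apply]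
  have h1 : EnDist T (N + 1) x y ≤ (1 / ((N : ℝ) + 1)) * (dist x (T^[N] y) + S) := by
    have h := EnDist_le' T (N + 1) x y τ
    rw [hsum] at h
    convert h using 2
    push_cast
    ring
  have hNS : (N : ℝ) * EnDist T N (T x) y = S := by
    rcases Nat.eq_zero_or_pos N with h0 | hpos
    · subst h0; simp [hS]
    · rw [hσ₀]
      have : ((N : ℝ)) ≠ 0 := by positivity
      field_simp
  have hpos1 : (0 : ℝ) < (N : ℝ) + 1 := by positivity
  calc ((N : ℝ) + 1) * EnDist T (N + 1) x y
      ≤ ((N : ℝ) + 1) * ((1 / ((N : ℝ) + 1)) * (dist x (T^[N] y) + S)) :=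
        mul_le_mul_of_nonneg_left h1 (le_of_lt hpos1)
    _ = dist x (T^[N] y) + S := by field_simp
    _ ≤ D + S := add_le_add_left (dist_le_D _ _) S
    _ = (N : ℝ) * EnDist T N (T x) y + D := by rw [hNS]; ring

private lemma key2 (T : X → X) (x y : X) (N : ℕ) :
    (N : ℝ) * EnDist T N (T x) y ≤
      ((N : ℝ) + 1) * EnDist T (N + 1) x y + 2 * Metric.diam (Set.univ : Set X) := by
  set D := Metric.diam (Set.univ : Set X) with hD
  have hD0 : 0 ≤ D := Metric.diam_nonneg
  obtain ⟨τ₀, hτ₀⟩ := EnDist_exists T (N + 1) x y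
  set τ' : Equiv.Perm (Fin (N + 1)) := τ₀.trans (Equiv.swap (τ₀ 0) (Fin.last N)) with hτ'
  have hτ'0 : τ' 0 = Fin.last N := by
    simp [hτ', Equiv.swap_apply_left]
  set e : Option (Fin N) ≃ Option (Fin N) :=
    (finSuccEquiv N).symm.trans (τ'.trans finSuccEquivLast) with he
  have henone : e none = none := by
    simp [he, hτ'0]
  set σ := e.removeNone with hσ
  have hes : ∀ i : Fin N, e (some i) = some (σ i) := by
    intro i
    have hex : ∃ j, e (some i) = some j := by
      rcases h' : e (some i) with _ | j
      · exact absurd (e.injective (h'.trans henone.symm)) (by simp)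
      · exact ⟨j, rfl⟩
    exact (Equiv.removeNone_some e hex).symm
  have hτ's : ∀ i : Fin N, τ' i.succ = Fin.castSucc (σ i) := by
    intro i
    have h1 : finSuccEquivLast (τ' i.succ) = some (σ i) := by
      have h2 := hes i
      simpa [he, finSuccEquiv_symm_some] using h2
    calc τ' i.succ = finSuccEquivLast.symm (finSuccEquivLast (τ' i.succ)) := by simp
      _ = finSuccEquivLast.symm (some (σ i)) := by rw [h1]
      _ = Fin.castSucc (σ i) := finSuccEquivLast_symm_some _
  set S : ℝ := ∑ k : Fin N, dist (T^[(k : ℕ)] (T x)) (T^[((σ k) : ℕ)] y) with hS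
  have hsum' : ∑ k : Fin (N + 1), dist (T^[(k : ℕ)] x) (T^[((τ' k) : ℕ)] y)
      = dist x (T^[N] y) + S := by
    rw [Fin.sum_univ_succ, hτ'0]
    simp only [Fin.val_zero, Function.iterate_zero_apply, Fin.val_last]
    congr 1
    refine Finset.sum_congr rfl fun i _ => ?_
    rw [hτ's i]
    simp [Fin.val_succ, Function.iterate_succ_apply]
  have hchange : ∀ k : Fin (N + 1), k ≠ 0 → k ≠ τ₀.symm (Fin.last N) → τ' k = τ₀ k := by
    intro k h0 hl
    have h1 : τ₀ k ≠ τ₀ 0 := fun h => h0 (τ₀.injective h)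
    have h2 : τ₀ k ≠ Fin.last N := fun h => hl (by rw [← h]; simp)
    simp [hτ', Equiv.swap_apply_of_ne_of_ne h1 h2]
  set s : Finset (Fin (N + 1)) := {0, τ₀.symm (Fin.last N)} with hs
  have hsub : ∑ k : Fin (N + 1), dist (T^[(k : ℕ)] x) (T^[((τ' k) : ℕ)] y)
      ≤ ∑ k : Fin (N + 1), dist (T^[(k : ℕ)] x) (T^[((τ₀ k) : ℕ)] y) + 2 * D := by
    have h1 : ∑ k ∈ Finset.univ \ s, dist (T^[(k : ℕ)] x) (T^[((τ' k) : ℕ)] y)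
        = ∑ k ∈ Finset.univ \ s, dist (T^[(k : ℕ)] x) (T^[((τ₀ k) : ℕ)] y) := by
      refine Finset.sum_congr rfl fun k hk => ?_
      simp only [hs, Finset.mem_sdiff, Finset.mem_insert, Finset.mem_singleton, not_or] at hk
      rw [hchange k hk.2.1 hk.2.2]
    have h2 : ∑ k ∈ s, dist (T^[(k : ℕ)] x) (T^[((τ' k) : ℕ)] y) ≤ 2 * D := by
      calc ∑ k ∈ s, dist (T^[(k : ℕ)] x) (T^[((τ' k) : ℕ)] y)
          ≤ ∑ _k ∈ s, D := Finset.sum_le_sum fun k _ => dist_le_D _ _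
        _ = (s.card : ℝ) * D := by rw [Finset.sum_const, nsmul_eq_mul]
        _ ≤ 2 * D := by
            refine mul_le_mul_of_nonneg_right ?_ hD0
            have hcard : s.card ≤ 2 := by
              refine (Finset.card_insert_le _ _).trans ?_
              simp
            exact_mod_cast hcard
    calc ∑ k : Fin (N + 1), dist (T^[(k : ℕ)] x) (T^[((τ' k) : ℕ)] y)
        = ∑ k ∈ Finset.univ \ s, dist (T^[(k : ℕ)] x) (T^[((τ' k) : ℕ)] y)
          + ∑ k ∈ s, dist (T^[(k : ℕ)] x) (T^[((τ' k) : ℕ)] y) :=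
          (Finset.sum_sdiff (Finset.subset_univ s)).symm
      _ ≤ ∑ k ∈ Finset.univ \ s, dist (T^[(k : ℕ)] x) (T^[((τ₀ k) : ℕ)] y) + 2 * D := by
          rw [h1]; exact add_le_add_right h2 _
      _ ≤ ∑ k : Fin (N + 1), dist (T^[(k : ℕ)] x) (T^[((τ₀ k) : ℕ)] y) + 2 * D := by
          refine add_le_add_left ?_ _
          exact Finset.sum_le_sum_of_subset_of_nonneg (Finset.sdiff_subset)
            (fun k _ _ => dist_nonneg)
  have hA : (N : ℝ) * EnDist T N (T x) y ≤ S := by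
    rcases Nat.eq_zero_or_pos N with h0 | hpos
    · subst h0; simp [hS]
    · have hNpos : (0 : ℝ) < (N : ℝ) := by exact_mod_cast hpos
      have h := EnDist_le' T N (T x) y σ
      calc (N : ℝ) * EnDist T N (T x) y ≤ (N : ℝ) * ((1 / (N : ℝ)) * S) :=
            mul_le_mul_of_nonneg_left h (le_of_lt hNpos)
        _ = S := by field_simp
  have hB : ((N : ℝ) + 1) * EnDist T (N + 1) x y
      = ∑ k : Fin (N + 1), dist (T^[(k : ℕ)] x) (T^[((τ₀ k) : ℕ)] y) := by
    rw [hτ₀]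
    have h1 : ((N : ℝ) + 1) ≠ 0 := by positivity
    push_cast
    field_simp
  calc (N : ℝ) * EnDist T N (T x) y ≤ S := hA
    _ ≤ dist x (T^[N] y) + S := le_add_of_nonneg_left dist_nonneg
    _ = ∑ k : Fin (N + 1), dist (T^[(k : ℕ)] x) (T^[((τ' k) : ℕ)] y) := hsum'.symm
    _ ≤ ∑ k : Fin (N + 1), dist (T^[(k : ℕ)] x) (T^[((τ₀ k) : ℕ)] y) + 2 * D := hsub
    _ = ((N : ℝ) + 1) * EnDist T (N + 1) x y + 2 * D := by rw [hB]

private lemma Ebar_T_left (T : X → X) (x y : X) : Ebar T (T x) y = Ebar T x y := by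
  set D := Metric.diam (Set.univ : Set X) with hD
  have hD0 : 0 ≤ D := Metric.diam_nonneg
  set f : ℕ → ℝ := fun N => EnDist T N x y with hf
  set g : ℕ → ℝ := fun N => EnDist T N (T x) y with hg
  have hf0 : ∀ N, 0 ≤ f N := fun N => EnDist_nonneg T N x y
  have hfD : ∀ N, f N ≤ D := fun N => EnDist_le_D T N x y
  have hg0 : ∀ N, 0 ≤ g N := fun N => EnDist_nonneg T N (T x) y
  have hgD : ∀ N, g N ≤ D := fun N => EnDist_le_D T N (T x) y
  have hgb : IsBoundedUnder (· ≤ ·) atTop g := ⟨D, Filter.eventually_map.2 (Eventually.of_forall hgD)⟩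
  have hgc : IsCoboundedUnder (· ≤ ·) atTop g :=
    IsBoundedUnder.isCoboundedUnder_le ⟨0, Filter.eventually_map.2 (Eventually.of_forall hg0)⟩
  have hfb : IsBoundedUnder (· ≤ ·) atTop (fun N => f (N + 1)) :=
    ⟨D, Filter.eventually_map.2 (Eventually.of_forall fun N => hfD (N + 1))⟩
  have hfc : IsCoboundedUnder (· ≤ ·) atTop (fun N => f (N + 1)) :=
    IsBoundedUnder.isCoboundedUnder_le
      ⟨0, Filter.eventually_map.2 (Eventually.of_forall fun N => hf0 (N + 1))⟩
  have hshift : limsup (fun N => f (N + 1)) atTop = limsup f atTop := limsup_nat_add f 1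
  have hmain : limsup g atTop = limsup f atTop := by
    apply le_antisymm
    · -- limsup g ≤ limsup f
      refine le_of_forall_pos_le_add fun ε hε => ?_
      have hev : ∀ᶠ N : ℕ in atTop, g N ≤ f (N + 1) + ε := by
        have h1 : ∀ᶠ N : ℕ in atTop, 3 * D / ε ≤ (N : ℝ) :=
          tendsto_natCast_atTop_atTop.eventually_ge_atTop _
        filter_upwards [h1, eventually_ge_atTop 1] with N hN hN1
        have hNpos : (0 : ℝ) < (N : ℝ) := by exact_mod_cast hN1
        have h3D : 3 * D ≤ (N : ℝ) * ε := by
          rw [div_le_iff₀ hε] at hN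
          linarith
        have hk := key2 T x y N
        have hfd : f (N + 1) ≤ D := hfD (N + 1)
        -- N * g N ≤ (N+1) * f (N+1) + 2D ≤ N * f(N+1) + 3D ≤ N * (f(N+1) + ε)
        have h4 : (N : ℝ) * g N ≤ (N : ℝ) * (f (N + 1) + ε) := by
          have : ((N : ℝ) + 1) * f (N + 1) = (N : ℝ) * f (N + 1) + f (N + 1) := by ring
          nlinarith [hk]
        exact le_of_mul_le_mul_left (by linarith [h4]) hNpos
      calc limsup g atTop ≤ limsup (fun N => f (N + 1) + ε) atTop := by
            refine limsup_le_limsup hev hgc ?_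
            exact ⟨D + ε, Filter.eventually_map.2
              (Eventually.of_forall fun N => add_le_add_left (hfD (N + 1)) ε)⟩
        _ = limsup (fun N => f (N + 1)) atTop + ε :=
            limsup_add_const atTop (fun N => f (N + 1)) ε hfb hfc
        _ = limsup f atTop + ε := by rw [hshift]
    · -- limsup f ≤ limsup g
      rw [← hshift]
      refine le_of_forall_pos_le_add fun ε hε => ?_
      have hev : ∀ᶠ N : ℕ in atTop, f (N + 1) ≤ g N + ε := by
        have h1 : ∀ᶠ N : ℕ in atTop, D / ε ≤ (N : ℝ) :=
          tendsto_natCast_atTop_atTop.eventually_ge_atTop _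
        filter_upwards [h1] with N hN
        have hNpos : (0 : ℝ) < (N : ℝ) + 1 := by positivity
        have hDe : D ≤ ((N : ℝ) + 1) * ε := by
          rw [div_le_iff₀ hε] at hN
          nlinarith [hε.le]
        have hk := key1 T x y N
        have h4 : ((N : ℝ) + 1) * f (N + 1) ≤ ((N : ℝ) + 1) * (g N + ε) := by
          nlinarith [hg0 N]
        exact le_of_mul_le_mul_left h4 hNpos
      calc limsup (fun N => f (N + 1)) atTop ≤ limsup (fun N => g N + ε) atTop := by
            refine limsup_le_limsup hev hfc ?_
            exact ⟨D + ε, Filter.eventually_map.2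
              (Eventually.of_forall fun N => add_le_add_left (hgD N) ε)⟩
        _ = limsup g atTop + ε := limsup_add_const atTop g ε hgb hgc
  exact hmain

private lemma EnDist_symm_le (T : X → X) (n : ℕ) (x y : X) :
    EnDist T n x y ≤ EnDist T n y x := by
  refine le_ciInf fun σ => ?_
  refine (ciInf_le (EnDist_bddBelow T n x y) σ⁻¹).trans (le_of_eq ?_)
  congr 1
  have h := Equiv.sum_comp σ⁻¹ (fun k : Fin n => dist (T^[(k : ℕ)] y) (T^[((σ k) : ℕ)] x))
  rw [← h]
  refine Finset.sum_congr rfl fun k _ => ?_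
  simp only [Equiv.Perm.inv_def, Equiv.apply_symm_apply]
  rw [dist_comm]

private lemma EnDist_symm (T : X → X) (n : ℕ) (x y : X) : EnDist T n x y = EnDist T n y x :=
  le_antisymm (EnDist_symm_le T n x y) (EnDist_symm_le T n y x)

private lemma Ebar_symm (T : X → X) (x y : X) : Ebar T x y = Ebar T y x := by
  unfold Ebar
  congr 1
  funext n
  exact EnDist_symm T n x y

private lemma Ebar_iter_left (T : X → X) (x y : X) (n : ℕ) :
    Ebar T (T^[n] x) y = Ebar T x y := by
  induction n with
  | zero => rfl
  | succ n ih => rw [Function.iterate_succ_apply', Ebar_T_left, ih]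

end Aux

/-- `Ē(Tⁿx, Tᵐy) = Ē(x,y)` for all `x, y ∈ X` and `n, m ≥ 0`. -/
theorem Ebar_iterate_invariant {X : Type*} [MetricSpace X] [CompactSpace X]
    (T : X → X) (hT : Continuous T) (x y : X) (n m : ℕ) :
    Ebar T (T^[n] x) (T^[m] y) = Ebar T x y := by
  rw [Ebar_iter_left, Ebar_symm, Ebar_iter_left, Ebar_symm]
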